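/- Net property from r-divisions: Let S be a set of n disjoint segments with trapezoidal decomposition TD(S), and let B be an s-division of the dual of TD(S). Let R ⊆ S be the set of segments that contribute a (non-vertical) side to the boundary of some region of the s-division. If e is a vertical segment whose interior intersects no segment of R, then e lies entirely within a single region of the s-division, and hence e intersects at most 2s segments of S (since each region is a union of at most s trapezoids, each bounded above and below by at most one segment of S). -/
import Mathlib


open Set

/-- The closed line segment determined by a pair of endpoints. -/
def segOf (s : (ℝ × ℝ) × (ℝ × ℝ)) : Set (ℝ × ℝ) := segment ℝ s.1 s.2

/-- Net property from `r`-divisions.  `S` is a set of disjoint segments, `𝓡` is the set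
of regions of an `s`-division of (the dual of) `TD(S)`: the regions partition the plane,
the non-vertical part of each region boundary lies on the segments of `R ⊆ S` (the
segments contributing a side to some region boundary; `V` is the vertical part), and
each region is a union of at most `s` trapezoids, each of which meets at most 2 segments
of `S` (its top and bottom).  If `e` is a vertical segment whose interior meets no
segment of `R` (and, by general position, no vertical boundary part), then `e` lies in a
single region and meets at most `2·s` segments of `S`. -/
theorem net_property_from_r_division
    (S R : Finset ((ℝ × ℝ) × (ℝ × ℝ))) (hRS : R ⊆ S) (s : ℕ)
    (𝓡 : Set (Set (ℝ × ℝ)))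
    (hcover : ⋃₀ 𝓡 = Set.univ)
    (hdisj : 𝓡.PairwiseDisjoint id)
    (V : Set (ℝ × ℝ))
    (hfront : ∀ γ ∈ 𝓡, frontier γ ⊆ (⋃ t ∈ R, segOf t) ∪ V)
    (htrap : ∀ γ ∈ 𝓡, ∃ T : Finset (Set (ℝ × ℝ)), T.card ≤ s ∧ (γ ⊆ ⋃ τ ∈ T, τ) ∧
      ∀ τ ∈ T, Nat.card {t : (ℝ × ℝ) × (ℝ × ℝ) | t ∈ S ∧ (segOf t ∩ τ).Nonempty} ≤ 2)
    (x y₁ y₂ : ℝ) (e : Set (ℝ × ℝ)) (he : e = openSegment ℝ (x, y₁) (x, y₂))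
    (hene : e.Nonempty)
    (havoidR : ∀ t ∈ R, segOf t ∩ e = ∅)
    (havoidV : V ∩ e = ∅) :
    (∃ γ ∈ 𝓡, e ⊆ γ) ∧
    Nat.card {t : (ℝ × ℝ) × (ℝ × ℝ) | t ∈ S ∧ (segOf t ∩ e).Nonempty} ≤ 2 * s := by
  classical
  have hconv : Convex ℝ e := he ▸ convex_openSegment _ _
  have hpre : IsPreconnected e := hconv.isPreconnected
  -- e avoids all region frontiers
  have hfr : ∀ γ ∈ 𝓡, e ∩ frontier γ = ∅ := by
    intro γ hγ
    apply eq_empty_of_subset_empty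
    rintro p ⟨hpe, hpf⟩
    rcases hfront γ hγ hpf with h | h
    · simp only [mem_iUnion] at h
      obtain ⟨t, ht, hpt⟩ := h
      have : p ∈ segOf t ∩ e := ⟨hpt, hpe⟩
      rw [havoidR t ht] at this
      exact this
    · have : p ∈ V ∩ e := ⟨h, hpe⟩
      rw [havoidV] at this
      exact this
  obtain ⟨x0, hx0⟩ := hene
  have hx0' : x0 ∈ ⋃₀ 𝓡 := by rw [hcover]; exact mem_univ x0
  obtain ⟨γ, hγ, hx0γ⟩ := hx0'
  have hsub : e ⊆ γ := by
    have hEsub : e ⊆ interior γ ∪ (closure γ)ᶜ := by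
      intro p hp
      by_cases hpc : p ∈ closure γ
      · left
        by_contra hni
        have hpf : p ∈ frontier γ := ⟨hpc, hni⟩
        have : p ∈ e ∩ frontier γ := ⟨hp, hpf⟩
        rw [hfr γ hγ] at this
        exact this
      · right; exact hpc
    have hx0i : x0 ∈ interior γ := by
      by_contra hni
      have hpf : x0 ∈ frontier γ := ⟨subset_closure hx0γ, hni⟩
      have : x0 ∈ e ∩ frontier γ := ⟨hx0, hpf⟩
      rw [hfr γ hγ] at this
      exact this
    have hdis : Disjoint (interior γ) (closure γ)ᶜ :=
      disjoint_compl_right.mono_left interior_subset_closure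
    have := hpre.subset_left_of_subset_union isOpen_interior
      isClosed_closure.isOpen_compl hdis hEsub ⟨x0, hx0, hx0i⟩
    exact this.trans interior_subset
  obtain ⟨T, hTcard, hγT, hτ⟩ := htrap γ hγ
  refine ⟨⟨γ, hγ, hsub⟩, ?_⟩
  set F : Set (ℝ × ℝ) → Finset ((ℝ × ℝ) × (ℝ × ℝ)) :=
    fun τ => S.filter (fun t => (segOf t ∩ τ).Nonempty) with hF
  have key : {t : (ℝ × ℝ) × (ℝ × ℝ) | t ∈ S ∧ (segOf t ∩ e).Nonempty} ⊆
      ↑(T.biUnion F) := by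
    rintro t ⟨htS, p, hpt, hpe⟩
    have hp : p ∈ ⋃ τ ∈ T, τ := hγT (hsub hpe)
    simp only [mem_iUnion] at hp
    obtain ⟨τ, hτT, hpτ⟩ := hp
    simp only [Finset.coe_biUnion, mem_iUnion, Finset.mem_coe, Finset.mem_filter, hF]
    exact ⟨τ, hτT, htS, ⟨p, hpt, hpτ⟩⟩
  have h1 : Nat.card {t : (ℝ × ℝ) × (ℝ × ℝ) | t ∈ S ∧ (segOf t ∩ e).Nonempty} ≤
      Nat.card ↑(↑(T.biUnion F) : Set ((ℝ × ℝ) × (ℝ × ℝ))) :=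
    Nat.card_mono (T.biUnion F).finite_toSet key
  simp only [Nat.card_coe_set_eq, Set.ncard_coe_finset] at h1
  have h2 : (T.biUnion F).card ≤ ∑ τ ∈ T, (F τ).card := Finset.card_biUnion_le
  have h3 : ∀ τ ∈ T, (F τ).card ≤ 2 := by
    intro τ hτT
    have hset : {t : (ℝ × ℝ) × (ℝ × ℝ) | t ∈ S ∧ (segOf t ∩ τ).Nonempty} =
        ↑(F τ) := by
      ext t; simp [hF]
    have := hτ τ hτT
    rw [hset] at this
    simp only [Nat.card_coe_set_eq, Set.ncard_coe_finset] at this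
    exact this
  have h4 : ∑ τ ∈ T, (F τ).card ≤ ∑ τ ∈ T, 2 := Finset.sum_le_sum h3
  simp only [Finset.sum_const, smul_eq_mul] at h4
  rw [Nat.card_coe_set_eq]
  calc {t : (ℝ × ℝ) × (ℝ × ℝ) | t ∈ S ∧ (segOf t ∩ e).Nonempty}.ncard
      ≤ T.card * 2 := le_trans h1 (le_trans h2 h4)
    _ ≤ 2 * s := by omega
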